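/- Zero mean of the de-biased (DBC) moment at the true parameter: E[(1/T)·Σ_{t=1}^{T} Ỹ_{t-1}·ε̃_t + Φ_T(φ)·σ̂_ε²] = 0, where Φ_T(φ) = (1/T²)·Σ_{l=0}^{T-2} Σ_{j=0}^{l} φ^j and σ̂_ε² = (1/(T-1))·Σ_{t=1}^{T} ε̃_t² is the within-transformed variance estimator evaluated at the true errors. -/

import Mathlib

open Finset MeasureTheory ProbabilityTheory

private lemma aux_integrable_mul {Ω : Type*} [MeasurableSpace Ω] {μ : Measure Ω}
    {f g : Ω → ℝ} (hf : MemLp f 2 μ) (hg : MemLp g 2 μ) :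
    Integrable (fun ω => f ω * g ω) μ := by
  have h := hf.smul (φ := g) hg (r := 1)
  rw [← memLp_one_iff_integrable]
  simpa [smul_eq_mul, mul_comm] using (show MemLp (fun ω => g ω * f ω) 1 μ from h)

private lemma aux_sum_id (φ : ℝ) (n : ℕ) (hn : 1 ≤ n) :
    ∑ t ∈ Icc 1 n, ∑ s ∈ Icc 1 (t-1), φ^((t-1)-s)
      = ∑ l ∈ range (n-1), ∑ j ∈ range (l+1), φ^j := by
  have inner : ∀ m : ℕ, ∑ s ∈ Icc 1 m, φ^(m-s) = ∑ j ∈ range m, φ^j := by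
    intro m
    rw [← Finset.Ico_add_one_right_eq_Icc, Finset.sum_Ico_eq_sum_range]
    simp only [Nat.add_sub_cancel_left, Nat.add_sub_cancel]
    rw [← Finset.sum_range_reflect]
    exact Finset.sum_congr rfl fun j hj => by rw [mem_range] at hj; congr 1; omega
  have h1 : ∑ t ∈ Icc 1 n, ∑ s ∈ Icc 1 (t-1), φ^((t-1)-s)
      = ∑ t ∈ Icc 1 n, ∑ j ∈ range (t-1), φ^j :=
    Finset.sum_congr rfl fun t _ => inner (t-1)
  rw [h1, ← Finset.Ico_add_one_right_eq_Icc, Finset.sum_Ico_eq_sum_range]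
  simp only [Nat.add_sub_cancel]
  have hne : n = (n-1)+1 := by omega
  rw [hne, Finset.sum_range_succ']
  simp

/-- Zero mean of the de-biased (DBC) moment at the true parameter:
`E[(1/T)·Σ_{t=1}^{T} Ỹ_{t-1}·ε̃_t + Φ_T(φ)·σ̂_ε²] = 0`, where
`Φ_T(φ) = (1/T²)·Σ_{l=0}^{T-2} Σ_{j=0}^{l} φ^j` and
`σ̂_ε² = (1/(T-1))·Σ_{t=1}^{T} ε̃_t²` is the within-transformed variance estimator evaluated at
the true errors. -/
theorem dbc_moment_mean_zero {Ω : Type*} [MeasurableSpace Ω]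
    (μ : Measure Ω) [IsProbabilityMeasure μ] (T : ℕ) (hT : 2 ≤ T)
    (ρ₁ τ ρ₂ φ a c Y₀ σε2 σu2 : ℝ) (hφ : φ = ρ₁ + τ * ρ₂)
    (ε u : ℕ → Ω → ℝ)
    (hεmeas : ∀ t, Measurable (ε t)) (humeas : ∀ t, Measurable (u t))
    (hεL2 : ∀ t : ℕ, 1 ≤ t → t ≤ T → MemLp (ε t) 2 μ)
    (huL2 : ∀ t : ℕ, 1 ≤ t → t ≤ T → MemLp (u t) 2 μ)
    (hindep : iIndepFun
      (Sum.elim (fun t : Fin T => ε (t + 1)) (fun t : Fin T => u (t + 1))) μ)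
    (hεmean : ∀ t : ℕ, 1 ≤ t → t ≤ T → ∫ ω, ε t ω ∂μ = 0)
    (humean : ∀ t : ℕ, 1 ≤ t → t ≤ T → ∫ ω, u t ω ∂μ = 0)
    (hεvar : ∀ t : ℕ, 1 ≤ t → t ≤ T → ∫ ω, (ε t ω) ^ 2 ∂μ = σε2)
    (huvar : ∀ t : ℕ, 1 ≤ t → t ≤ T → ∫ ω, (u t ω) ^ 2 ∂μ = σu2)
    (Y D : ℕ → Ω → ℝ) (hY0 : ∀ ω, Y 0 ω = Y₀)
    (hD : ∀ t : ℕ, 1 ≤ t → t ≤ T → ∀ ω, D t ω = c + ρ₂ * Y (t - 1) ω + u t ω)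
    (hY : ∀ t : ℕ, 1 ≤ t → t ≤ T → ∀ ω,
      Y t ω = a + ρ₁ * Y (t - 1) ω + τ * D t ω + ε t ω):
    ∫ ω, ((1 / (T : ℝ)) * ∑ t ∈ Icc 1 T,
        (Y (t - 1) ω - (1 / (T : ℝ)) * ∑ s ∈ Icc 1 T, Y (s - 1) ω)
          * (ε t ω - (1 / (T : ℝ)) * ∑ s ∈ Icc 1 T, ε s ω)
      + ((1 / (T : ℝ) ^ 2) * ∑ l ∈ range (T - 1), ∑ j ∈ range (l + 1), φ ^ j)
          * ((1 / ((T : ℝ) - 1)) * ∑ t ∈ Icc 1 T,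
              (ε t ω - (1 / (T : ℝ)) * ∑ s ∈ Icc 1 T, ε s ω) ^ 2)) ∂μ = 0 := by
  have hT0 : (T : ℝ) ≠ 0 := by positivity
  have hT1 : (T : ℝ) - 1 ≠ 0 := by
    have : (2:ℝ) ≤ T := by exact_mod_cast hT
    linarith
  -- the deterministic part of Y
  set g : ℕ → ℝ := fun t => Nat.rec Y₀ (fun _ ih => a + τ * c + φ * ih) t with hg
  have hgs : ∀ t : ℕ, g (t+1) = a + τ * c + φ * g t := fun _ => rfl
  -- the composite shock
  set V : ℕ → Ω → ℝ := fun t ω => ε t ω + τ * u t ω with hV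
  -- representation of Y
  have hrep : ∀ t, t ≤ T → ∀ ω, Y t ω = g t + ∑ j ∈ Icc 1 t, φ^(t-j) * V j ω := by
    intro t
    induction t with
    | zero => intro _ ω; simp [hY0 ω, hg]
    | succ t ih =>
      intro h ω
      have h1 : 1 ≤ t+1 := by omega
      rw [hY (t+1) h1 h ω, hD (t+1) h1 h ω]
      simp only [Nat.add_sub_cancel]
      rw [ih (by omega) ω]
      rw [Finset.sum_Icc_succ_top h1, hgs t]
      have hmul : ∑ j ∈ Icc 1 t, φ^(t+1-j) * V j ω
          = φ * ∑ j ∈ Icc 1 t, φ^(t-j) * V j ω := by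
        rw [Finset.mul_sum]
        refine Finset.sum_congr rfl fun j hj => ?_
        have hj' : j ≤ t := (Finset.mem_Icc.mp hj).2
        rw [show t+1-j = (t-j)+1 by omega, pow_succ]
        ring
      rw [hmul]
      simp only [hV, Nat.sub_self, pow_zero, hφ]
      ring
  -- L² facts
  have hVL2 : ∀ t, 1 ≤ t → t ≤ T → MemLp (V t) 2 μ := by
    intro t h1 h2
    exact (hεL2 t h1 h2).add ((huL2 t h1 h2).const_mul τ)
  have Iεε : ∀ s t, 1 ≤ s → s ≤ T → 1 ≤ t → t ≤ T →
      Integrable (fun ω => ε s ω * ε t ω) μ := fun s t h1 h2 h3 h4 =>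
    aux_integrable_mul (hεL2 s h1 h2) (hεL2 t h3 h4)
  have Iuε : ∀ s t, 1 ≤ s → s ≤ T → 1 ≤ t → t ≤ T →
      Integrable (fun ω => u s ω * ε t ω) μ := fun s t h1 h2 h3 h4 =>
    aux_integrable_mul (huL2 s h1 h2) (hεL2 t h3 h4)
  have IVε : ∀ s t, 1 ≤ s → s ≤ T → 1 ≤ t → t ≤ T →
      Integrable (fun ω => V s ω * ε t ω) μ := fun s t h1 h2 h3 h4 =>
    aux_integrable_mul (hVL2 s h1 h2) (hεL2 t h3 h4)
  -- moment facts
  have mεε : ∀ s t, 1 ≤ s → s ≤ T → 1 ≤ t → t ≤ T →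
      ∫ ω, ε s ω * ε t ω ∂μ = if s = t then σε2 else 0 := by
    intro s t h1 h2 h3 h4
    by_cases hst : s = t
    · subst hst
      simp only [if_pos rfl, ← pow_two]
      exact hεvar s h1 h2
    · rw [if_neg hst]
      have hne : (Sum.inl ⟨s-1, by omega⟩ : Fin T ⊕ Fin T) ≠ Sum.inl ⟨t-1, by omega⟩ := by
        simp only [ne_eq, Sum.inl.injEq, Fin.mk.injEq]; omega
      have h := hindep.indepFun hne
      simp only [Sum.elim_inl] at h
      have e1 : s - 1 + 1 = s := by omega
      have e2 : t - 1 + 1 = t := by omega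
      rw [e1, e2] at h
      have := h.integral_mul_eq_mul_integral
        ((hεL2 s h1 h2).integrable one_le_two).aestronglyMeasurable ((hεL2 t h3 h4).integrable one_le_two).aestronglyMeasurable
      rw [show (fun ω => ε s ω * ε t ω) = ε s * ε t from rfl, this,
        hεmean s h1 h2, hεmean t h3 h4, mul_zero]
  have muε : ∀ s t, 1 ≤ s → s ≤ T → 1 ≤ t → t ≤ T →
      ∫ ω, u s ω * ε t ω ∂μ = 0 := by
    intro s t h1 h2 h3 h4
    have hne : (Sum.inr ⟨s-1, by omega⟩ : Fin T ⊕ Fin T) ≠ Sum.inl ⟨t-1, by omega⟩ := by simp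
    have h := hindep.indepFun hne
    simp only [Sum.elim_inl, Sum.elim_inr] at h
    have e1 : s - 1 + 1 = s := by omega
    have e2 : t - 1 + 1 = t := by omega
    rw [e1, e2] at h
    have := h.integral_mul_eq_mul_integral
      ((huL2 s h1 h2).integrable one_le_two).aestronglyMeasurable ((hεL2 t h3 h4).integrable one_le_two).aestronglyMeasurable
    rw [show (fun ω => u s ω * ε t ω) = u s * ε t from rfl, this,
      humean s h1 h2, hεmean t h3 h4, mul_zero]
  have mVε : ∀ s t, 1 ≤ s → s ≤ T → 1 ≤ t → t ≤ T →
      ∫ ω, V s ω * ε t ω ∂μ = if s = t then σε2 else 0 := by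
    intro s t h1 h2 h3 h4
    have hpt : ∀ ω, V s ω * ε t ω = ε s ω * ε t ω + τ * (u s ω * ε t ω) := by
      intro ω; simp only [hV]; ring
    rw [show (fun ω => V s ω * ε t ω) = fun ω => ε s ω * ε t ω + τ * (u s ω * ε t ω)
        from funext hpt]
    rw [integral_add (Iεε s t h1 h2 h3 h4) ((Iuε s t h1 h2 h3 h4).const_mul τ),
      integral_const_mul, mεε s t h1 h2 h3 h4, muε s t h1 h2 h3 h4, mul_zero, add_zero]
  -- moment of Y t * ε s
  have mYε : ∀ t s, t ≤ T → 1 ≤ s → s ≤ T →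
      ∫ ω, Y t ω * ε s ω ∂μ = if s ≤ t then φ^(t-s) * σε2 else 0 := by
    intro t s htT hs1 hsT
    have hpt : ∀ ω, Y t ω * ε s ω
        = g t * ε s ω + ∑ j ∈ Icc 1 t, φ^(t-j) * (V j ω * ε s ω) := by
      intro ω
      rw [hrep t htT ω, add_mul, Finset.sum_mul]
      congr 1
      exact Finset.sum_congr rfl fun j _ => by ring
    rw [show (fun ω => Y t ω * ε s ω)
        = fun ω => g t * ε s ω + ∑ j ∈ Icc 1 t, φ^(t-j) * (V j ω * ε s ω)
        from funext hpt]
    have hint : ∀ j ∈ Icc 1 t, Integrable (fun ω => φ^(t-j) * (V j ω * ε s ω)) μ := by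
      intro j hj
      rw [Finset.mem_Icc] at hj
      exact (IVε j s hj.1 (by omega) hs1 hsT).const_mul _
    rw [integral_add (((hεL2 s hs1 hsT).integrable one_le_two).const_mul _)
        (integrable_finset_sum _ hint),
      integral_const_mul, hεmean s hs1 hsT, mul_zero, zero_add,
      integral_finset_sum _ hint]
    have : ∀ j ∈ Icc 1 t, ∫ ω, φ^(t-j) * (V j ω * ε s ω) ∂μ
        = if j = s then φ^(t-j) * σε2 else 0 := by
      intro j hj
      rw [Finset.mem_Icc] at hj
      rw [integral_const_mul, mVε j s hj.1 (by omega) hs1 hsT]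
      by_cases h : j = s <;> simp [h]
    rw [Finset.sum_congr rfl this, Finset.sum_ite_eq' (Icc 1 t) s
      (fun j => φ^(t-j) * σε2)]
    by_cases h : s ≤ t <;> simp [Finset.mem_Icc, h, hs1]
  -- integrability of Y (t-1) * ε s
  have IYε : ∀ t s, t ≤ T → 1 ≤ s → s ≤ T →
      Integrable (fun ω => Y t ω * ε s ω) μ := by
    intro t s htT hs1 hsT
    have hpt : ∀ ω, Y t ω * ε s ω
        = g t * ε s ω + ∑ j ∈ Icc 1 t, φ^(t-j) * (V j ω * ε s ω) := by
      intro ω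
      rw [hrep t htT ω, add_mul, Finset.sum_mul]
      congr 1
      exact Finset.sum_congr rfl fun j _ => by ring
    rw [show (fun ω => Y t ω * ε s ω)
        = fun ω => g t * ε s ω + ∑ j ∈ Icc 1 t, φ^(t-j) * (V j ω * ε s ω)
        from funext hpt]
    refine (((hεL2 s hs1 hsT).integrable one_le_two).const_mul _).add
      (integrable_finset_sum _ fun j hj => ?_)
    rw [Finset.mem_Icc] at hj
    exact (IVε j s hj.1 (by omega) hs1 hsT).const_mul _
  -- abbreviations
  set Sφ : ℝ := ∑ l ∈ range (T - 1), ∑ j ∈ range (l + 1), φ ^ j with hSφ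
  set C : ℝ := ((1 / (T : ℝ) ^ 2) * Sφ) * (1 / ((T : ℝ) - 1)) with hC
  -- pointwise identity
  have key : ∀ ω, ((1 / (T : ℝ)) * ∑ t ∈ Icc 1 T,
        (Y (t - 1) ω - (1 / (T : ℝ)) * ∑ s ∈ Icc 1 T, Y (s - 1) ω)
          * (ε t ω - (1 / (T : ℝ)) * ∑ s ∈ Icc 1 T, ε s ω)
      + ((1 / (T : ℝ) ^ 2) * Sφ)
          * ((1 / ((T : ℝ) - 1)) * ∑ t ∈ Icc 1 T,
              (ε t ω - (1 / (T : ℝ)) * ∑ s ∈ Icc 1 T, ε s ω) ^ 2))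
      = ∑ t ∈ Icc 1 T, ((1/(T:ℝ)) * (Y (t-1) ω * ε t ω)
          - (1/(T:ℝ)^2) * ∑ s ∈ Icc 1 T, Y (t-1) ω * ε s ω
          + C * (ε t ω)^2
          - (C/(T:ℝ)) * ∑ s ∈ Icc 1 T, ε t ω * ε s ω) := by
    intro ω
    have hcard : ((Icc 1 T).card : ℝ) = (T : ℝ) := by
      rw [Nat.card_Icc]; push_cast; ring
    set QA := ∑ s ∈ Icc 1 T, Y (s-1) ω with hQA
    set Qe := ∑ s ∈ Icc 1 T, ε s ω with hQe
    have e1 : ∑ t ∈ Icc 1 T, (Y (t-1) ω - (1/(T:ℝ)) * QA) * (ε t ω - (1/(T:ℝ)) * Qe)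
        = ∑ t ∈ Icc 1 T, Y (t-1) ω * ε t ω
          - ((1/(T:ℝ)) * Qe) * QA - ((1/(T:ℝ)) * QA) * Qe
          + (T:ℝ) * (((1/(T:ℝ)) * QA) * ((1/(T:ℝ)) * Qe)) := by
      have : ∀ t ∈ Icc 1 T, (Y (t-1) ω - (1/(T:ℝ)) * QA) * (ε t ω - (1/(T:ℝ)) * Qe)
          = Y (t-1) ω * ε t ω - ((1/(T:ℝ)) * Qe) * Y (t-1) ω
            - ((1/(T:ℝ)) * QA) * ε t ω + ((1/(T:ℝ)) * QA) * ((1/(T:ℝ)) * Qe) :=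
        fun t _ => by ring
      rw [Finset.sum_congr rfl this, Finset.sum_add_distrib, Finset.sum_sub_distrib,
        Finset.sum_sub_distrib, ← Finset.mul_sum, ← Finset.mul_sum, ← hQA, ← hQe,
        Finset.sum_const, nsmul_eq_mul, hcard]
    have e2 : ∑ t ∈ Icc 1 T, (ε t ω - (1/(T:ℝ)) * Qe) ^ 2
        = ∑ t ∈ Icc 1 T, (ε t ω)^2 - 2 * ((1/(T:ℝ)) * Qe) * Qe
          + (T:ℝ) * ((1/(T:ℝ)) * Qe)^2 := by
      have : ∀ t ∈ Icc 1 T, (ε t ω - (1/(T:ℝ)) * Qe) ^ 2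
          = (ε t ω)^2 - 2 * ((1/(T:ℝ)) * Qe) * ε t ω + ((1/(T:ℝ)) * Qe)^2 :=
        fun t _ => by ring
      rw [Finset.sum_congr rfl this, Finset.sum_add_distrib, Finset.sum_sub_distrib,
        ← Finset.mul_sum, ← hQe, Finset.sum_const, nsmul_eq_mul, hcard]
    have e3 : ∀ t ∈ Icc 1 T, (1/(T:ℝ)) * (Y (t-1) ω * ε t ω)
          - (1/(T:ℝ)^2) * ∑ s ∈ Icc 1 T, Y (t-1) ω * ε s ω
          + C * (ε t ω)^2
          - (C/(T:ℝ)) * ∑ s ∈ Icc 1 T, ε t ω * ε s ω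
        = (1/(T:ℝ)) * (Y (t-1) ω * ε t ω)
          - (1/(T:ℝ)^2) * (Y (t-1) ω * Qe)
          + C * (ε t ω)^2
          - (C/(T:ℝ)) * (ε t ω * Qe) := by
      intro t _
      rw [← Finset.mul_sum, ← Finset.mul_sum, ← hQe]
    rw [Finset.sum_congr rfl e3, e1, e2]
    rw [Finset.sum_sub_distrib, Finset.sum_add_distrib, Finset.sum_sub_distrib]
    rw [← Finset.mul_sum, ← Finset.mul_sum, ← Finset.mul_sum, ← Finset.mul_sum]
    rw [← Finset.sum_mul, ← hQA]
    rw [← Finset.sum_mul, ← hQe]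
    rw [hC]
    field_simp
    ring
  rw [show (fun ω => ((1 / (T : ℝ)) * ∑ t ∈ Icc 1 T,
        (Y (t - 1) ω - (1 / (T : ℝ)) * ∑ s ∈ Icc 1 T, Y (s - 1) ω)
          * (ε t ω - (1 / (T : ℝ)) * ∑ s ∈ Icc 1 T, ε s ω)
      + ((1 / (T : ℝ) ^ 2) * Sφ)
          * ((1 / ((T : ℝ) - 1)) * ∑ t ∈ Icc 1 T,
              (ε t ω - (1 / (T : ℝ)) * ∑ s ∈ Icc 1 T, ε s ω) ^ 2)))
      = fun ω => ∑ t ∈ Icc 1 T, ((1/(T:ℝ)) * (Y (t-1) ω * ε t ω)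
          - (1/(T:ℝ)^2) * ∑ s ∈ Icc 1 T, Y (t-1) ω * ε s ω
          + C * (ε t ω)^2
          - (C/(T:ℝ)) * ∑ s ∈ Icc 1 T, ε t ω * ε s ω) from funext key]
  -- integrate term by term
  have hintY : ∀ t ∈ Icc 1 T, ∀ s ∈ Icc 1 T,
      Integrable (fun ω => Y (t-1) ω * ε s ω) μ := by
    intro t ht s hs
    rw [Finset.mem_Icc] at ht hs
    exact IYε (t-1) s (by omega) hs.1 hs.2
  have hintεε : ∀ t ∈ Icc 1 T, ∀ s ∈ Icc 1 T,
      Integrable (fun ω => ε t ω * ε s ω) μ := by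
    intro t ht s hs
    rw [Finset.mem_Icc] at ht hs
    exact Iεε t s ht.1 ht.2 hs.1 hs.2
  have hintt : ∀ t ∈ Icc 1 T, Integrable (fun ω => (1/(T:ℝ)) * (Y (t-1) ω * ε t ω)
          - (1/(T:ℝ)^2) * ∑ s ∈ Icc 1 T, Y (t-1) ω * ε s ω
          + C * (ε t ω)^2
          - (C/(T:ℝ)) * ∑ s ∈ Icc 1 T, ε t ω * ε s ω) μ := by
    intro t ht
    have h1 := (hintY t ht t ht).const_mul (1/(T:ℝ))
    have h2 := (integrable_finset_sum (μ := μ) (Icc 1 T)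
      (fun s hs => hintY t ht s hs)).const_mul (1/(T:ℝ)^2)
    have ht' := Finset.mem_Icc.mp ht
    have h3 := ((hεL2 t ht'.1 ht'.2).integrable_sq).const_mul C
    have h4 := (integrable_finset_sum (μ := μ) (Icc 1 T)
      (fun s hs => hintεε t ht s hs)).const_mul (C/(T:ℝ))
    exact ((h1.sub h2).add h3).sub h4
  rw [integral_finset_sum _ hintt]
  have hterm : ∀ t ∈ Icc 1 T, ∫ ω, ((1/(T:ℝ)) * (Y (t-1) ω * ε t ω)
          - (1/(T:ℝ)^2) * ∑ s ∈ Icc 1 T, Y (t-1) ω * ε s ω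
          + C * (ε t ω)^2
          - (C/(T:ℝ)) * ∑ s ∈ Icc 1 T, ε t ω * ε s ω) ∂μ
      = - (1/(T:ℝ)^2) * (σε2 * ∑ s ∈ Icc 1 (t-1), φ^((t-1)-s)) + C * σε2 - (C/(T:ℝ)) * σε2 := by
    intro t ht
    have ht' := Finset.mem_Icc.mp ht
    have h1 := (hintY t ht t ht).const_mul (1/(T:ℝ))
    have h2 := (integrable_finset_sum (μ := μ) (Icc 1 T)
      (fun s hs => hintY t ht s hs)).const_mul (1/(T:ℝ)^2)
    have h3 := ((hεL2 t ht'.1 ht'.2).integrable_sq).const_mul C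
    have h4 := (integrable_finset_sum (μ := μ) (Icc 1 T)
      (fun s hs => hintεε t ht s hs)).const_mul (C/(T:ℝ))
    have hAB : Integrable (fun ω => (1/(T:ℝ)) * (Y (t-1) ω * ε t ω)
        - (1/(T:ℝ)^2) * ∑ s ∈ Icc 1 T, Y (t-1) ω * ε s ω) μ := h1.sub h2
    have hABC : Integrable (fun ω => (1/(T:ℝ)) * (Y (t-1) ω * ε t ω)
        - (1/(T:ℝ)^2) * ∑ s ∈ Icc 1 T, Y (t-1) ω * ε s ω + C * (ε t ω)^2) μ := hAB.add h3
    rw [integral_sub hABC h4, integral_add hAB h3, integral_sub h1 h2]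
    rw [integral_const_mul, integral_const_mul, integral_const_mul, integral_const_mul]
    rw [integral_finset_sum _ (fun s hs => hintY t ht s hs),
      integral_finset_sum _ (fun s hs => hintεε t ht s hs)]
    rw [mYε (t-1) t (by omega) ht'.1 ht'.2, if_neg (by omega)]
    have hs1 : ∑ s ∈ Icc 1 T, ∫ ω, Y (t-1) ω * ε s ω ∂μ
        = σε2 * ∑ s ∈ Icc 1 (t-1), φ^((t-1)-s) := by
      have step1 : ∀ s ∈ Icc 1 T, ∫ ω, Y (t-1) ω * ε s ω ∂μ
          = if s ≤ t-1 then φ^((t-1)-s) * σε2 else 0 := by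
        intro s hs
        have hs' := Finset.mem_Icc.mp hs
        exact mYε (t-1) s (by omega) hs'.1 hs'.2
      rw [Finset.sum_congr rfl step1]
      rw [← Finset.sum_subset (Finset.Icc_subset_Icc_right (by omega : t-1 ≤ T))
        (fun s hs hns => by
          rw [Finset.mem_Icc] at hs; rw [Finset.mem_Icc] at hns
          rw [if_neg]; omega)]
      rw [Finset.mul_sum]
      refine Finset.sum_congr rfl fun s hs => ?_
      rw [Finset.mem_Icc] at hs
      rw [if_pos hs.2]; ring
    have hs2 : ∑ s ∈ Icc 1 T, ∫ ω, ε t ω * ε s ω ∂μ = σε2 := by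
      have step1 : ∀ s ∈ Icc 1 T, ∫ ω, ε t ω * ε s ω ∂μ
          = if s = t then σε2 else 0 := by
        intro s hs
        have hs' := Finset.mem_Icc.mp hs
        rw [mεε t s ht'.1 ht'.2 hs'.1 hs'.2]
        by_cases h : s = t
        · simp [h]
        · rw [if_neg (fun hh => h hh.symm), if_neg h]
      rw [Finset.sum_congr rfl step1, Finset.sum_ite_eq' (Icc 1 T) t (fun _ => σε2),
        if_pos ht]
    have hε2 : ∫ ω, (ε t ω)^2 ∂μ = σε2 := hεvar t ht'.1 ht'.2
    rw [hs1, hs2, hε2]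
    ring
  rw [Finset.sum_congr rfl hterm]
  have hSid : ∑ t ∈ Icc 1 T, ∑ s ∈ Icc 1 (t-1), φ^((t-1)-s) = Sφ :=
    aux_sum_id φ T (by omega)
  have hstep : ∀ t ∈ Icc 1 T,
      (-(1/(T:ℝ)^2) * (σε2 * ∑ s ∈ Icc 1 (t-1), φ^((t-1)-s)) + C * σε2 - (C/(T:ℝ)) * σε2)
      = (-(1/(T:ℝ)^2) * σε2) * (∑ s ∈ Icc 1 (t-1), φ^((t-1)-s))
        + (C * σε2 - (C/(T:ℝ)) * σε2) := fun t _ => by ring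
  rw [Finset.sum_congr rfl hstep, Finset.sum_add_distrib, ← Finset.mul_sum, hSid,
    Finset.sum_const, nsmul_eq_mul]
  have hcard : ((Icc 1 T).card : ℝ) = (T : ℝ) := by
    rw [Nat.card_Icc]; push_cast; ring
  rw [hcard, hC]
  field_simp
  ring
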